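/- For iid random variables with mean μ ≠ 0 and variance σ², and finite index sets u, v ⊆ {1,...,n}, the covariance Cov(x_u, x_v) = μ^{|u|+|v|}((1+ρ²)^{|u∩v|} − 1), where x_u = ∏_{i∈u} X_i and ρ = σ/μ. -/

import Mathlib

open MeasureTheory ProbabilityTheory

lemma prod_integral_aux {Ω : Type*} [MeasurableSpace Ω] (P : Measure Ω) [IsProbabilityMeasure P]
    {n : ℕ} {X : Fin n → Ω → ℝ}
    (hIndep : iIndepFun X P)
    (hmeas : ∀ i, Measurable (X i))
    (φ : Fin n → ℝ → ℝ) (hφ : ∀ i, Measurable (φ i)) (s : Finset (Fin n)) :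
    ∫ ω, ∏ i ∈ s, φ i (X i ω) ∂P = ∏ i ∈ s, ∫ ω, φ i (X i ω) ∂P := by
  set g : Fin n → Ω → ℝ := fun i ω => φ i (X i ω) with hg
  have hgIndep : iIndepFun g P :=
    hIndep.comp φ hφ
  have hgmeas : ∀ i, Measurable (g i) := fun i => (hφ i).comp (hmeas i)
  induction s using Finset.cons_induction with
  | empty => simp
  | cons a s ha ih =>
    have hind : IndepFun (g a) (fun ω => ∏ i ∈ s, g i ω) P := by
      have h := (hgIndep.indepFun_finsetProd_of_notMem hgmeas ha).symm
      have he : (∏ j ∈ s, g j) = fun ω => ∏ i ∈ s, g i ω := by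
        funext ω; simp [Finset.prod_apply]
      rwa [he] at h
    have h1 : (fun ω => ∏ i ∈ Finset.cons a s ha, g i ω)
        = fun ω => g a ω * ∏ i ∈ s, g i ω := by
      funext ω; rw [Finset.prod_cons]
    calc ∫ ω, ∏ i ∈ Finset.cons a s ha, g i ω ∂P
        = ∫ ω, g a ω * ∏ i ∈ s, g i ω ∂P := by rw [h1]
      _ = (∫ ω, g a ω ∂P) * ∫ ω, ∏ i ∈ s, g i ω ∂P := by
          exact hind.integral_mul_eq_mul_integral (hgmeas a).aestronglyMeasurable
            (Finset.measurable_prod s (fun i _ => hgmeas i)).aestronglyMeasurable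
      _ = ∏ i ∈ Finset.cons a s ha, ∫ ω, g i ω ∂P := by rw [Finset.prod_cons, ih]

/-- For iid random variables with mean `m ≠ 0` and variance `σ²`, and finite index sets
`u, v`, the covariance `Cov(x_u, x_v) = E[x_u x_v] − E[x_u]·E[x_v]` equals
`m^(|u|+|v|)·((1+ρ²)^(|u∩v|) − 1)` with `ρ = σ/m`. -/
theorem stmt2 {Ω : Type*} [MeasurableSpace Ω] (P : Measure Ω) [IsProbabilityMeasure P]
    (n : ℕ) (X : Fin n → Ω → ℝ) (m σ : ℝ) (hm : m ≠ 0)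
    (hIndep : iIndepFun X P)
    (hmeas : ∀ i, Measurable (X i))
    (hident : ∀ i j, IdentDistrib (X i) (X j) P P)
    (hL2 : ∀ s : Finset (Fin n), MemLp (fun ω => ∏ i ∈ s, X i ω) 2 P)
    (hmean : ∀ i, ∫ ω, X i ω ∂P = m)
    (hvar : ∀ i, variance (X i) P = σ ^ 2)
    (u v : Finset (Fin n)) :
    (∫ ω, (∏ i ∈ u, X i ω) * (∏ i ∈ v, X i ω) ∂P)
        - (∫ ω, ∏ i ∈ u, X i ω ∂P) * (∫ ω, ∏ i ∈ v, X i ω ∂P)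
      = m ^ (u.card + v.card) * ((1 + (σ / m) ^ 2) ^ (u ∩ v).card - 1) := by
  -- means of products
  have hmean_prod : ∀ s : Finset (Fin n), ∫ ω, ∏ i ∈ s, X i ω ∂P = m ^ s.card := by
    intro s
    have := prod_integral_aux P hIndep hmeas (fun _ x => x) (fun _ => measurable_id) s
    simpa [hmean, Finset.prod_const] using this
  -- second moment
  have hsq : ∀ i, ∫ ω, (X i ω) ^ 2 ∂P = σ ^ 2 + m ^ 2 := by
    intro i
    have hL2i : MemLp (X i) 2 P := by
      have := hL2 {i}
      simpa using this
    have hv := variance_eq_sub hL2i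
    rw [hvar i, hmean i] at hv
    have : (∫ ω, (X i ω) ^ 2 ∂P) = P[(X i) ^ 2] := by
      congr 1
    rw [this]; linarith
  -- the mixed product as a single product over u ∪ v
  set ψ : Fin n → ℝ → ℝ := fun i x => if i ∈ u ∩ v then x ^ 2 else x with hψ
  have hψmeas : ∀ i, Measurable (ψ i) := by
    intro i
    by_cases h : i ∈ u ∩ v <;> simp only [hψ, h, if_true, if_false]
    · exact measurable_id.pow_const 2
    · exact measurable_id
  have hpoint : ∀ ω, (∏ i ∈ u, X i ω) * (∏ i ∈ v, X i ω)
      = ∏ i ∈ u ∪ v, ψ i (X i ω) := by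
    intro ω
    set a : Fin n → ℝ := fun i => X i ω
    have h1 : (∏ i ∈ u ∪ v, ψ i (a i))
        = (∏ i ∈ (u ∪ v).filter (· ∈ u ∩ v), (a i) ^ 2)
          * ∏ i ∈ (u ∪ v).filter (¬ · ∈ u ∩ v), a i := by
      rw [← Finset.prod_ite]
    have e1 : (u ∪ v).filter (· ∈ u ∩ v) = u ∩ v := by
      ext i; simp; tauto
    have e2 : (u ∪ v).filter (¬ · ∈ u ∩ v) = (u \ v) ∪ (v \ u) := by
      ext i; simp; tauto
    have hdisj : Disjoint (u \ v) (v \ u) := by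
      rw [Finset.disjoint_left]; intro i hi hi'
      simp at hi hi'; tauto
    have hu : u = (u ∩ v) ∪ (u \ v) := by
      ext i; simp; tauto
    have hv' : v = (u ∩ v) ∪ (v \ u) := by
      ext i; simp; tauto
    have hdu : Disjoint (u ∩ v) (u \ v) := by
      rw [Finset.disjoint_left]; intro i hi hi'; simp at hi hi'; tauto
    have hdv : Disjoint (u ∩ v) (v \ u) := by
      rw [Finset.disjoint_left]; intro i hi hi'; simp at hi hi'; tauto
    calc (∏ i ∈ u, a i) * ∏ i ∈ v, a i
        = ((∏ i ∈ u ∩ v, a i) * ∏ i ∈ u \ v, a i)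
          * ((∏ i ∈ u ∩ v, a i) * ∏ i ∈ v \ u, a i) := by
          rw [← Finset.prod_union hdu, ← Finset.prod_union hdv, ← hu, ← hv']
      _ = (∏ i ∈ u ∩ v, (a i) ^ 2) * ((∏ i ∈ u \ v, a i) * ∏ i ∈ v \ u, a i) := by
          rw [Finset.prod_pow]; ring
      _ = ∏ i ∈ u ∪ v, ψ i (a i) := by
          rw [h1, e1, e2, Finset.prod_union hdisj]
  have hmix : ∫ ω, (∏ i ∈ u, X i ω) * (∏ i ∈ v, X i ω) ∂P
      = ∏ i ∈ u ∪ v, ∫ ω, ψ i (X i ω) ∂P := by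
    rw [show (fun ω => (∏ i ∈ u, X i ω) * (∏ i ∈ v, X i ω))
        = fun ω => ∏ i ∈ u ∪ v, ψ i (X i ω) from funext hpoint]
    exact prod_integral_aux P hIndep hmeas ψ hψmeas (u ∪ v)
  have hval : ∀ i, (∫ ω, ψ i (X i ω) ∂P) = if i ∈ u ∩ v then σ ^ 2 + m ^ 2 else m := by
    intro i
    by_cases h : i ∈ u ∩ v <;> simp only [hψ, h, if_true, if_false]
    · exact hsq i
    · exact hmean i
  have hprodval : (∏ i ∈ u ∪ v, ∫ ω, ψ i (X i ω) ∂P)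
      = (σ ^ 2 + m ^ 2) ^ (u ∩ v).card * m ^ ((u ∪ v).card - (u ∩ v).card) := by
    rw [Finset.prod_congr rfl (fun i _ => hval i), Finset.prod_ite,
      Finset.prod_const, Finset.prod_const]
    have e1 : (u ∪ v).filter (· ∈ u ∩ v) = u ∩ v := by
      ext i; simp; tauto
    have e2 : ((u ∪ v).filter (¬ · ∈ u ∩ v)).card = (u ∪ v).card - (u ∩ v).card := by
      rw [Finset.filter_not, Finset.card_sdiff_of_subset (Finset.filter_subset _ _), e1]
    rw [e1, e2]
  rw [hmix, hprodval, hmean_prod, hmean_prod]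
  -- algebra
  set k := (u ∩ v).card
  have hk1 : k ≤ u.card := Finset.card_le_card (Finset.inter_subset_left)
  have hk2 : k ≤ v.card := Finset.card_le_card (Finset.inter_subset_right)
  have hcard : (u ∪ v).card + k = u.card + v.card :=
    Finset.card_union_add_card_inter u v
  have hσm : σ ^ 2 + m ^ 2 = m ^ 2 * (1 + (σ / m) ^ 2) := by
    field_simp; ring
  rw [hσm, mul_pow, ← pow_mul]
  have key : m ^ (2 * k) * m ^ ((u ∪ v).card - k) = m ^ (u.card + v.card) := by
    rw [← pow_add]; congr 1
    have : k ≤ (u ∪ v).card := by omega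
    omega
  rw [mul_right_comm, key, ← pow_add]
  ring
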